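/- Let G be a nonabelian finite 2-group with δ_CD(G) ≤ 6. Then the center Z(G) is cyclic of order 2 or 4. -/

import Mathlib

noncomputable def mCD {G : Type*} [Group G] (H : Subgroup G) : ℕ :=
  Nat.card H * Nat.card (Subgroup.centralizer (H : Set G))

noncomputable def mStar (G : Type*) [Group G] : ℕ :=
  sSup (Set.range fun H : Subgroup G => mCD H)

noncomputable def CD (G : Type*) [Group G] : Set (Subgroup G) :=
  {H | mCD H = mStar G}

noncomputable def deltaCD (G : Type*) [Group G] : ℕ :=
  Nat.card {H : Subgroup G // H ∉ CD G}

section L1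
variable {G : Type*} [Group G] [Finite G]

lemma mCD_le_mStar (H : Subgroup G) : mCD H ≤ mStar G := by
  apply le_csSup
  · refine ⟨Nat.card G * Nat.card G, ?_⟩
    rintro x ⟨K, rfl⟩
    exact Nat.mul_le_mul K.card_le_card_group (Subgroup.card_le_card_group _)
  · exact Set.mem_range_self H

lemma center_le_of_mem_CD {H : Subgroup G} (hH : H ∈ CD G) : Subgroup.center G ≤ H := by
  by_contra hZ
  set K := H ⊔ Subgroup.center G with hK
  have hHK : H < K := by
    refine lt_of_le_of_ne le_sup_left fun he => hZ ?_
    rw [he, hK]; exact le_sup_right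
  have hcent : Subgroup.centralizer (K : Set G) = Subgroup.centralizer (H : Set G) := by
    refine le_antisymm (Subgroup.centralizer_le (by exact_mod_cast SetLike.coe_subset_coe.mpr hHK.le)) ?_
    intro g hg
    rw [Subgroup.mem_centralizer_iff]
    intro x hx
    have : x ∈ (↑(H ⊔ Subgroup.center G) : Set G) := hx
    rw [Subgroup.mul_normal] at this
    obtain ⟨a, ha, b, hb, rfl⟩ := this
    have hag : a * g = g * a := Subgroup.mem_centralizer_iff.mp hg a ha
    have hbg : b * g = g * b := hb.comm g
    rw [mul_assoc, hbg, ← mul_assoc, hag, mul_assoc]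
  have hcard : Nat.card H < Nat.card K := by
    rcases lt_or_eq_of_le (Subgroup.card_le_of_le hHK.le) with h' | h'
    · exact h'
    · exact absurd (Subgroup.eq_of_le_of_card_ge hHK.le h'.ge) hHK.ne
  have hlt : mCD H < mCD K := by
    unfold mCD
    rw [hcent]
    have hpos : 0 < Nat.card (Subgroup.centralizer (H : Set G)) := Nat.card_pos
    exact Nat.mul_lt_mul_of_lt_of_le hcard le_rfl hpos
  have := mCD_le_mStar (G := G) K
  rw [hH] at hlt
  omega

lemma notin_CD_of_not_center_le {H : Subgroup G} (hZ : ¬ Subgroup.center G ≤ H) : H ∉ CD G :=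
  fun hH => hZ (center_le_of_mem_CD hH)

end L1

section Helpers
variable {G : Type*} [Group G]

open Subgroup

-- counting: 7 pairwise-distinct elements avoiding CD force 7 ≤ deltaCD-style bound
lemma seven_le_card {S : Set (Subgroup G)} [Finite G]
    (l : List (Subgroup G)) (hnd : l.Nodup) (hmem : ∀ H ∈ l, H ∈ S) :
    l.length ≤ Nat.card {H : Subgroup G // H ∈ S} := by
  classical
  have hfin : S.Finite := Set.toFinite S
  have h1 : Nat.card {H : Subgroup G // H ∈ S} = S.ncard := (Nat.card_coe_set_eq S)
  rw [h1]
  have h2 : (l.toFinset : Set (Subgroup G)) ⊆ S := by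
    intro x hx
    simp only [List.coe_toFinset, Set.mem_setOf_eq, List.mem_toFinset] at hx
    exact hmem x hx
  calc l.length = l.toFinset.card := (List.toFinset_card_of_nodup hnd).symm
    _ = (l.toFinset : Set (Subgroup G)).ncard := (Set.ncard_coe_finset _).symm
    _ ≤ S.ncard := Set.ncard_le_ncard h2 hfin

-- L8
lemma mem_zpowers_invol {t x : G} (ht : t * t = 1) (hx : x ∈ zpowers t) : x = 1 ∨ x = t := by
  obtain ⟨i, rfl⟩ := hx
  have ht2 : t ^ (2:ℤ) = 1 := by rw [zpow_two, ht]
  rcases Int.even_or_odd i with ⟨k, hk⟩ | ⟨k, hk⟩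
  · left
    show t ^ i = 1
    rw [hk, ← two_mul, zpow_mul, ht2, one_zpow]
  · right
    show t ^ i = t
    rw [hk, zpow_add, zpow_mul, ht2, one_zpow, one_mul, zpow_one]

-- zpowers is cyclic
lemma isCyclic_zpowers (g : G) : IsCyclic (zpowers g) := by
  refine ⟨⟨g, mem_zpowers g⟩, fun x => ?_⟩
  obtain ⟨k, hk⟩ := x.2
  exact ⟨k, Subtype.ext (by simpa using hk)⟩

-- L7
lemma isCyclic_of_le_zpowers {K : Subgroup G} {w : G} (h : K ≤ zpowers w) : IsCyclic K := by
  have := _root_.isCyclic_zpowers w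
  exact Subgroup.isCyclic_of_le h

-- L4 : members of sup of zpowers with central element
lemma mem_sup_zpowers_central {t c x : G} (hc : c ∈ Subgroup.center G)
    (hx : x ∈ zpowers t ⊔ zpowers c) : ∃ i j : ℤ, x = t ^ i * c ^ j := by
  have hnormal : (zpowers c).Normal := by
    constructor
    intro n hn g
    obtain ⟨j, rfl⟩ := hn
    have : g * c ^ j * g⁻¹ = c ^ j := by
      have hcg : c ^ j * g = g * c ^ j := by
        have := (Subgroup.mem_center_iff.mp ((Subgroup.center G).zpow_mem hc j)) g
        exact this.symm
      rw [← hcg, mul_assoc, mul_inv_cancel, mul_one]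
    rw [this]; exact zpow_mem (mem_zpowers c) j
  have : x ∈ (↑(zpowers t ⊔ zpowers c) : Set G) := hx
  rw [Subgroup.mul_normal] at this
  obtain ⟨a, ha, b, hb, rfl⟩ := this
  obtain ⟨i, rfl⟩ := ha
  obtain ⟨j, rfl⟩ := hb
  exact ⟨i, j, rfl⟩

end Helpers

section L5
variable {G : Type*} [Group G]
open Subgroup

lemma comparable_of_unique_invol {u : G}
    (hu : ∀ t : G, t * t = 1 → t = 1 ∨ t = u) :
    ∀ p q : ℕ, p ≤ q → ∀ z g : G, Commute z g → orderOf z ∣ 2 ^ p → orderOf g = 2 ^ q →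
      z ∈ zpowers g := by
  intro p
  induction p with
  | zero =>
    intro q _ z g _ hz _
    simp only [pow_zero, Nat.dvd_one, orderOf_eq_one_iff] at hz
    rw [hz]; exact one_mem _
  | succ p ih =>
    intro q hpq z g hcom hz hg
    by_cases hz' : orderOf z ∣ 2 ^ p
    · exact ih q (by omega) z g hcom hz' hg
    · have hq1 : 1 ≤ q := by omega
      have hu1 : z ^ (2 ^ p) = u := by
        rcases hu (z ^ (2 ^ p)) (by
          rw [← pow_add, ← two_mul, ← pow_succ']
          exact orderOf_dvd_iff_pow_eq_one.mp hz) with h | h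
        · exact absurd (orderOf_dvd_iff_pow_eq_one.mpr h) hz'
        · exact h
      have hu2 : g ^ (2 ^ (q - 1)) = u := by
        rcases hu (g ^ (2 ^ (q - 1))) (by
          rw [← pow_add, ← two_mul, ← pow_succ']
          have : q - 1 + 1 = q := by omega
          rw [this, ← hg]
          exact pow_orderOf_eq_one g) with h | h
        · exfalso
          have := orderOf_dvd_iff_pow_eq_one.mpr h
          rw [hg] at this
          have := Nat.le_of_dvd (by positivity) this
          have h2 : (2:ℕ) ^ (q-1) < 2 ^ q := Nat.pow_lt_pow_right one_lt_two (by omega)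
          omega
        · exact h
      set m := 2 ^ (q - 1 - p) with hm
      set z' := z * (g ^ m)⁻¹ with hz'def
      have hcom' : Commute z ((g ^ m)⁻¹) := (hcom.pow_right m).inv_right
      have hz'pow : z' ^ (2 ^ p) = 1 := by
        rw [hz'def, hcom'.mul_pow, hu1]
        have hmp : m * 2 ^ p = 2 ^ (q - 1) := by
          rw [hm, ← pow_add]
          congr 1
          omega
        rw [inv_pow, ← pow_mul, hmp, hu2, mul_inv_cancel]
      have hz'mem : z' ∈ zpowers g :=
        ih q (by omega) z' g (Commute.mul_left hcom ((Commute.refl g).pow_left m).inv_left) 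
          (orderOf_dvd_iff_pow_eq_one.mpr hz'pow) hg
      have : z = z' * g ^ m := by
        rw [hz'def, mul_assoc, inv_mul_cancel, mul_one]
      rw [this]
      exact mul_mem hz'mem ((zpowers g).pow_mem (mem_zpowers g) m)

end L5


section L6x
variable {G : Type*} [Group G]
open Subgroup

lemma exists_invol [Finite G] (hG : IsPGroup 2 G) [Nontrivial G] :
    ∃ t : G, t ≠ 1 ∧ t * t = 1 := by
  haveI : Fact (Nat.Prime 2) := ⟨Nat.prime_two⟩
  obtain ⟨g, hg⟩ := exists_ne (1 : G)
  obtain ⟨k, hk⟩ := (IsPGroup.iff_orderOf.mp hG) g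
  have hk1 : 1 ≤ k := by
    by_contra hlt
    have : k = 0 := by omega
    rw [this, pow_zero, orderOf_eq_one_iff] at hk
    exact hg hk
  refine ⟨g ^ (2 ^ (k - 1)), ?_, ?_⟩
  · intro hone
    have := orderOf_dvd_iff_pow_eq_one.mpr hone
    rw [hk] at this
    have := Nat.le_of_dvd (by positivity) this
    have h2 : (2:ℕ) ^ (k-1) < 2 ^ k := Nat.pow_lt_pow_right one_lt_two (by omega)
    omega
  · rw [← pow_add, ← two_mul, ← pow_succ']
    have : k - 1 + 1 = k := by omega
    rw [this, ← hk]
    exact pow_orderOf_eq_one g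

lemma isCyclic_of_at_most_one_invol [Finite G] (hG : IsPGroup 2 G)
    (hcomm : ∀ a b : G, a * b = b * a)
    (h1 : ∀ t1 t2 : G, t1 * t1 = 1 → t2 * t2 = 1 → t1 ≠ 1 → t2 ≠ 1 → t1 = t2) :
    IsCyclic G := by
  rcases subsingleton_or_nontrivial G with hs | hs
  · infer_instance
  · obtain ⟨u, hu1, hu2⟩ := exists_invol hG
    have hu : ∀ t : G, t * t = 1 → t = 1 ∨ t = u := by
      intro t ht
      by_cases h : t = 1
      · exact Or.inl h
      · exact Or.inr (h1 t u ht hu2 h hu1)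
    obtain ⟨g0, hg0⟩ := Finite.exists_max (orderOf : G → ℕ)
    refine ⟨g0, fun x => ?_⟩
    obtain ⟨px, hpx⟩ := (IsPGroup.iff_orderOf.mp hG) x
    obtain ⟨p0, hp0⟩ := (IsPGroup.iff_orderOf.mp hG) g0
    have hle : px ≤ p0 := by
      have := hg0 x
      rw [hpx, hp0] at this
      exact (Nat.pow_le_pow_iff_right one_lt_two).mp this
    exact comparable_of_unique_invol hu px p0 hle x g0 (hcomm x g0) (hpx ▸ dvd_rfl) hp0

end L6x


section NCx
variable {G : Type*} [Group G]
open Subgroup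

lemma case_noncyclic [Finite G] (hG : IsPGroup 2 G)
    {a b : G} (hab : ¬ a * b = b * a)
    (hnc : ¬ IsCyclic (Subgroup.center G)) (h : deltaCD G ≤ 6) : False := by
  classical
  -- two involutions in the center
  have h2inv : ∃ ζ1 ζ2 : Subgroup.center G, ζ1 * ζ1 = 1 ∧ ζ2 * ζ2 = 1 ∧ ζ1 ≠ 1 ∧ ζ2 ≠ 1 ∧ ζ1 ≠ ζ2 := by
    by_contra hno
    push_neg at hno
    refine hnc (isCyclic_of_at_most_one_invol (hG.to_subgroup _) ?_ ?_)
    · intro x y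
      exact Subtype.ext (by push_cast; exact (Subgroup.mem_center_iff.mp y.2) x)
    · intro t1 t2 h1 h2 h3 h4
      exact hno t1 t2 h1 h2 h3 h4
  obtain ⟨ζ1, ζ2, hζ1, hζ2, hζ1n, hζ2n, hζne⟩ := h2inv
  set u : G := (ζ1 : G) with hudef
  set v : G := (ζ2 : G) with hvdef
  have hu2 : u * u = 1 := by
    have := congrArg (Subtype.val) hζ1; simpa using this
  have hv2 : v * v = 1 := by
    have := congrArg (Subtype.val) hζ2; simpa using this
  have hun : u ≠ 1 := fun h' => hζ1n (Subtype.ext h')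
  have hvn : v ≠ 1 := fun h' => hζ2n (Subtype.ext h')
  have huv : u ≠ v := fun h' => hζne (Subtype.ext h')
  have huc : u ∈ Subgroup.center G := ζ1.2
  have hvc : v ∈ Subgroup.center G := ζ2.2
  have huvc : u * v ∈ Subgroup.center G := mul_mem huc hvc
  have hcuv : u * v = v * u := (Subgroup.mem_center_iff.mp hvc) u
  have huv2 : (u * v) * (u * v) = 1 := by
    calc (u*v)*(u*v) = u*(v*u)*v := by group
    _ = u*(u*v)*v := by rw [← hcuv]
    _ = (u*u)*(v*v) := by group
    _ = 1 := by rw [hu2, hv2, one_mul]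
  have huvn : u * v ≠ 1 := by
    intro h'
    have h1 : v = u⁻¹ := eq_inv_of_mul_eq_one_right h'
    have hinv : u⁻¹ = u := inv_eq_of_mul_eq_one_right hu2
    exact huv (h1.trans hinv).symm
  -- noncommuting basics
  have ha1 : a ≠ 1 := by intro h'; rw [h'] at hab; simp at hab
  have hb1 : b ≠ 1 := by intro h'; rw [h'] at hab; simp at hab
  have hab1 : a * b ≠ 1 := by
    intro h'
    have : b = a⁻¹ := eq_inv_of_mul_eq_one_right h'
    rw [this] at hab; simp at hab
  have hanc : a ∉ Subgroup.center G := fun h' => hab ((Subgroup.mem_center_iff.mp h') b).symm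
  have hbnc : b ∉ Subgroup.center G := fun h' => hab ((Subgroup.mem_center_iff.mp h') a)
  have habnc : a * b ∉ Subgroup.center G := by
    intro h'
    have := (Subgroup.mem_center_iff.mp h') a
    -- a * (a*b) = (a*b) * a
    have : a * b = b * a := by
      have h2 : a * (a * b) = a * (b * a) := by rw [this]; group
      exact mul_left_cancel h2
    exact hab this
  -- distinctness helpers
  have dbot : ∀ w : G, w ≠ 1 → zpowers w ≠ zpowers (1 : G) := by
    intro w hw he
    rw [zpowers_one_eq_bot] at he
    exact hw (Subgroup.mem_bot.mp (he ▸ mem_zpowers w))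
  have dcent : ∀ w g : G, w ∈ Subgroup.center G → g ∉ Subgroup.center G →
      zpowers w ≠ zpowers g := by
    intro w g hw hg he
    exact hg (((zpowers_le).mpr hw) (he ▸ mem_zpowers g))
  have dinv : ∀ w g : G, w * w = 1 → g ≠ 1 → g ≠ w → zpowers w ≠ zpowers g := by
    intro w g hw hg hgw he
    rcases mem_zpowers_invol hw (he ▸ mem_zpowers g) with h' | h'
    · exact hg h'
    · exact hgw h'
  have dcomm : ∀ w g : G, (¬ Commute w g) → zpowers w ≠ zpowers g := by
    intro w g hc he
    apply hc
    obtain ⟨i, hi⟩ := (he ▸ mem_zpowers g : g ∈ zpowers w)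
    rw [← hi]
    exact Commute.zpow_right (Commute.refl w) i
  -- the list
  have hmem : ∀ H ∈ ([zpowers (1:G), zpowers u, zpowers v, zpowers (u*v),
      zpowers a, zpowers b, zpowers (a*b)] : List (Subgroup G)), H ∉ CD G := by
    intro H hH
    fin_cases hH <;>
      · apply notin_CD_of_not_center_le
        intro hle
        exact hnc (isCyclic_of_le_zpowers hle)
  have hndp : ([zpowers (1:G), zpowers u, zpowers v, zpowers (u*v),
      zpowers a, zpowers b, zpowers (a*b)] : List (Subgroup G)).Nodup := by
    have c1 : ¬ Commute a b := hab
    have c2 : ¬ Commute a (a*b) := by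
      intro hc
      have h2 : a * (a * b) = a * (b * a) := by
        rw [hc.eq, mul_assoc]
      exact hab (mul_left_cancel h2)
    have c3 : ¬ Commute b (a*b) := by
      intro hc
      apply hab
      have h2 : b * (a * b) = (a * b) * b := hc.eq
      have h3 : (b * a) * b = (a * b) * b := by rw [mul_assoc]; exact h2
      exact (mul_right_cancel h3).symm
    refine List.nodup_cons.mpr ⟨?_, List.nodup_cons.mpr ⟨?_, List.nodup_cons.mpr ⟨?_,
      List.nodup_cons.mpr ⟨?_, List.nodup_cons.mpr ⟨?_, List.nodup_cons.mpr ⟨?_,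
      List.nodup_singleton _⟩⟩⟩⟩⟩⟩ <;>
      simp only [List.mem_cons, List.mem_singleton, List.not_mem_nil, or_false] <;>
      push_neg
    · exact ⟨(dbot u hun).symm, (dbot v hvn).symm, (dbot (u*v) huvn).symm,
        (dbot a ha1).symm, (dbot b hb1).symm, (dbot (a*b) hab1).symm⟩
    · exact ⟨dinv u v hu2 hvn (fun h => huv h.symm), dinv u (u*v) hu2 huvn
        (fun h => hvn (mul_left_cancel (by rw [h, mul_one]))),
        dcent u a huc hanc, dcent u b huc hbnc, dcent u (a*b) huc habnc⟩
    · exact ⟨dinv v (u*v) hv2 huvn (fun h => hun (mul_right_cancel (by rw [h, one_mul]))),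
        dcent v a hvc hanc, dcent v b hvc hbnc, dcent v (a*b) hvc habnc⟩
    · exact ⟨dcent (u*v) a huvc hanc, dcent (u*v) b huvc hbnc, dcent (u*v) (a*b) huvc habnc⟩
    · exact ⟨dcomm a b c1, dcomm a (a*b) c2⟩
    · exact dcomm b (a*b) c3
  have h7 : (7:ℕ) ≤ Nat.card {H : Subgroup G // H ∉ CD G} := by
    have := seven_le_card (S := {H : Subgroup G | H ∉ CD G}) _ hndp hmem
    simpa using this
  unfold deltaCD at h
  omega

end NCx


section CIx
variable {G : Type*} [Group G]
open Subgroup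

-- squares of members of invol-sup
lemma sq_eq_one_of_mem_sup {t c x : G} (hc : c ∈ Subgroup.center G)
    (ht : t * t = 1) (hc2 : c * c = 1) (hx : x ∈ zpowers t ⊔ zpowers c) : x * x = 1 := by
  obtain ⟨i, j, rfl⟩ := mem_sup_zpowers_central hc hx
  have hcen : ∀ g : G, g * c ^ j = c ^ j * g := fun g =>
    (Subgroup.mem_center_iff.mp ((Subgroup.center G).zpow_mem hc j)) g
  have ht2 : t ^ (2:ℤ) = 1 := by rw [zpow_two, ht]
  have hc2' : c ^ (2:ℤ) = 1 := by rw [zpow_two, hc2]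
  have h1 : t ^ (i + i) = 1 := by
    rw [show i + i = 2 * i by ring, zpow_mul, ht2, one_zpow]
  have h2 : c ^ (j + j) = 1 := by
    rw [show j + j = 2 * j by ring, zpow_mul, hc2', one_zpow]
  calc (t ^ i * c ^ j) * (t ^ i * c ^ j) = (t ^ i * t ^ i) * (c ^ j * c ^ j) := by
        rw [mul_assoc, ← mul_assoc (c ^ j), ← hcen (t ^ i), mul_assoc, ← mul_assoc]
    _ = t ^ (i + i) * c ^ (j + j) := by rw [← zpow_add, ← zpow_add]
    _ = 1 := by rw [h1, h2, one_mul]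

lemma zpow_sq_one_pow4 {t : G} (ht : t * t = 1) (i : ℤ) : (t ^ i) ^ (4:ℕ) = 1 := by
  have ht2 : t ^ (2:ℤ) = 1 := by rw [zpow_two, ht]
  rw [← zpow_natCast (t ^ i) 4, ← zpow_mul,
    show i * ((4:ℕ):ℤ) = 2 * (2 * i) by push_cast; ring, zpow_mul, ht2, one_zpow]

lemma zpow_pow4_one {c : G} (hc4 : c ^ (4:ℕ) = 1) (i : ℤ) : (c ^ i) ^ (4:ℕ) = 1 := by
  rw [← zpow_natCast (c ^ i) 4, ← zpow_mul,
    show i * ((4:ℕ):ℤ) = ((4:ℕ):ℤ) * i by ring, zpow_mul, zpow_natCast, hc4, one_zpow]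

lemma pow4_eq_one_of_mem_sup {t c x : G} (hc : c ∈ Subgroup.center G)
    (ht : t * t = 1) (hc4 : c ^ (4:ℕ) = 1) (hx : x ∈ zpowers t ⊔ zpowers c) :
    x ^ (4:ℕ) = 1 := by
  obtain ⟨i, j, rfl⟩ := mem_sup_zpowers_central hc hx
  have hcom : Commute (t ^ i) (c ^ j) :=
    ((Subgroup.mem_center_iff.mp ((Subgroup.center G).zpow_mem hc j)) (t ^ i))
  rw [hcom.mul_pow, zpow_sq_one_pow4 ht i, zpow_pow4_one hc4 j, one_mul]

lemma case_cyclic_i [Finite G] {z0 : G} {n : ℕ}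
    (hz0c : z0 ∈ Subgroup.center G) (horder : orderOf z0 = 2 ^ n) (hn : 3 ≤ n)
    {t : G} (ht2 : t * t = 1) (htnc : t ∉ Subgroup.center G)
    (h : deltaCD G ≤ 6) : False := by
  classical
  have h8 : (8:ℕ) ≤ 2 ^ n :=
    le_trans (by norm_num) (Nat.pow_le_pow_right (by norm_num) hn)
  -- basic elements
  set u : G := z0 ^ (2 ^ (n-1)) with hudef
  set v : G := z0 ^ (2 ^ (n-2)) with hvdef
  have hpow_n : ∀ m : ℕ, 2 ^ n ∣ m → z0 ^ m = 1 := by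
    intro m hm
    exact orderOf_dvd_iff_pow_eq_one.mp (horder ▸ hm)
  have hpow_ne : ∀ m : ℕ, 0 < m → m < 2 ^ n → z0 ^ m ≠ 1 := by
    intro m hm1 hm2 he
    have hd := orderOf_dvd_iff_pow_eq_one.mpr he
    rw [horder] at hd
    have := Nat.le_of_dvd hm1 hd
    omega
  have e1 : 2 * 2 ^ (n-1) = 2 ^ n := by
    rw [← pow_succ']
    congr 1
    omega
  have e2 : 2 * 2 ^ (n-2) = 2 ^ (n-1) := by
    rw [← pow_succ']
    congr 1
    omega
  have e3 : 2 ^ (n-2) * 4 = 2 ^ n := by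
    rw [show (4:ℕ) = 2 ^ 2 from rfl, ← pow_add]
    congr 1
    omega
  have hlt1 : 2 ^ (n-1) < 2 ^ n := Nat.pow_lt_pow_right one_lt_two (by omega)
  have hlt2 : 2 ^ (n-2) < 2 ^ n := Nat.pow_lt_pow_right one_lt_two (by omega)
  have hu2 : u * u = 1 := by
    rw [hudef, ← pow_add, ← two_mul, e1]
    exact hpow_n _ dvd_rfl
  have hun : u ≠ 1 := hpow_ne _ (by positivity) hlt1
  have hv2u : v * v = u := by
    rw [hvdef, hudef, ← pow_add, ← two_mul, e2]
  have hvn : v ≠ 1 := hpow_ne _ (by positivity) hlt2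
  have hvnu : v ≠ u := by
    intro he
    have h1 : v * v = v := by rw [hv2u, ← he]
    have h2 : v * v = 1 * v := by rw [h1, one_mul]
    exact hvn (mul_right_cancel h2)
  have hv4 : v ^ (4:ℕ) = 1 := by
    rw [hvdef, ← pow_mul, e3]
    exact hpow_n _ dvd_rfl
  have huc : u ∈ Subgroup.center G := (Subgroup.center G).pow_mem hz0c _
  have hvc : v ∈ Subgroup.center G := (Subgroup.center G).pow_mem hz0c _
  -- z0 powers nonone
  have hz0sq : z0 * z0 ≠ 1 := by
    rw [← pow_two]
    apply hpow_ne <;> omega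
  have hz04 : z0 ^ (4:ℕ) ≠ 1 := by
    apply hpow_ne <;> omega
  have hz0n1 : z0 ≠ 1 := by
    intro he
    apply hz0sq
    rw [he, mul_one]
  -- t and t*u
  have htn1 : t ≠ 1 := fun he => htnc (he ▸ (Subgroup.center G).one_mem)
  have huinv : u⁻¹ = u := inv_eq_of_mul_eq_one_right hu2
  have htu2 : (t * u) * (t * u) = 1 := by
    have hcen : ∀ g : G, g * u = u * g := fun g => (Subgroup.mem_center_iff.mp huc) g
    calc (t * u) * (t * u) = t * (u * t) * u := by group
    _ = t * (t * u) * u := by rw [← hcen t]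
    _ = (t * t) * (u * u) := by group
    _ = 1 := by rw [ht2, hu2, one_mul]
  have htunc : t * u ∉ Subgroup.center G := by
    intro hmem
    apply htnc
    have : t = (t * u) * u⁻¹ := by group
    rw [this, huinv]
    exact mul_mem hmem huc
  have htun1 : t * u ≠ 1 := by
    intro he
    apply htnc
    have : t = u⁻¹ := eq_inv_of_mul_eq_one_left he
    rw [this, huinv]
    exact huc
  -- non-containment of center
  have hnc_of : ∀ H : Subgroup G, z0 ∉ H → ¬ Subgroup.center G ≤ H := fun H hz hle => hz (hle hz0c)
  have m1 : ¬ Subgroup.center G ≤ (⊥ : Subgroup G) := by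
    apply hnc_of
    intro hmem
    exact hz0n1 (Subgroup.mem_bot.mp hmem)
  have m2 : ¬ Subgroup.center G ≤ zpowers u := by
    apply hnc_of
    intro hmem
    rcases mem_zpowers_invol hu2 hmem with h' | h'
    · exact hz0n1 h'
    · exact hz0sq (by rw [h', hu2])
  have m3 : ¬ Subgroup.center G ≤ zpowers v := by
    apply hnc_of
    intro hmem
    obtain ⟨i, hi⟩ := hmem
    apply hz04
    rw [← hi]
    exact zpow_pow4_one hv4 i
  have m4 : ¬ Subgroup.center G ≤ zpowers t := by
    apply hnc_of
    intro hmem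
    rcases mem_zpowers_invol ht2 hmem with h' | h'
    · exact hz0n1 h'
    · exact hz0sq (by rw [h', ht2])
  have m5 : ¬ Subgroup.center G ≤ zpowers t ⊔ zpowers u := by
    apply hnc_of
    intro hmem
    exact hz0sq (sq_eq_one_of_mem_sup huc ht2 hu2 hmem)
  have m6 : ¬ Subgroup.center G ≤ zpowers t ⊔ zpowers v := by
    apply hnc_of
    intro hmem
    exact hz04 (pow4_eq_one_of_mem_sup hvc ht2 hv4 hmem)
  have m7 : ¬ Subgroup.center G ≤ zpowers (t * u) := by
    apply hnc_of
    intro hmem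
    rcases mem_zpowers_invol htu2 hmem with h' | h'
    · exact hz0n1 h'
    · exact hz0sq (by rw [h', htu2])
  -- distinctness
  have hu_le_c : zpowers u ≤ Subgroup.center G := zpowers_le.mpr huc
  have hv_le_c : zpowers v ≤ Subgroup.center G := zpowers_le.mpr hvc
  have ht_mem5 : t ∈ zpowers t ⊔ zpowers u := (le_sup_left : zpowers t ≤ _) (mem_zpowers t)
  have ht_mem6 : t ∈ zpowers t ⊔ zpowers v := (le_sup_left : zpowers t ≤ _) (mem_zpowers t)
  have hu_mem5 : u ∈ zpowers t ⊔ zpowers u := (le_sup_right : zpowers u ≤ _) (mem_zpowers u)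
  have hv_mem6 : v ∈ zpowers t ⊔ zpowers v := (le_sup_right : zpowers v ≤ _) (mem_zpowers v)
  have d12 : (⊥ : Subgroup G) ≠ zpowers u := by
    intro he
    exact hun (Subgroup.mem_bot.mp (by rw [he]; exact mem_zpowers u))
  have d13 : (⊥ : Subgroup G) ≠ zpowers v := by
    intro he
    exact hvn (Subgroup.mem_bot.mp (by rw [he]; exact mem_zpowers v))
  have d14 : (⊥ : Subgroup G) ≠ zpowers t := by
    intro he
    exact htn1 (Subgroup.mem_bot.mp (by rw [he]; exact mem_zpowers t))
  have d15 : (⊥ : Subgroup G) ≠ zpowers t ⊔ zpowers u := by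
    intro he
    exact htn1 (Subgroup.mem_bot.mp (by rw [he]; exact ht_mem5))
  have d16 : (⊥ : Subgroup G) ≠ zpowers t ⊔ zpowers v := by
    intro he
    exact htn1 (Subgroup.mem_bot.mp (by rw [he]; exact ht_mem6))
  have d17 : (⊥ : Subgroup G) ≠ zpowers (t * u) := by
    intro he
    exact htun1 (Subgroup.mem_bot.mp (by rw [he]; exact mem_zpowers (t*u)))
  have d23 : zpowers u ≠ zpowers v := by
    intro he
    have : v ∈ zpowers u := by rw [he]; exact mem_zpowers v
    rcases mem_zpowers_invol hu2 this with h' | h'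
    · exact hvn h'
    · exact hvnu h'
  have d24 : zpowers u ≠ zpowers t := by
    intro he
    exact htnc (hu_le_c (by rw [he]; exact mem_zpowers t))
  have d25 : zpowers u ≠ zpowers t ⊔ zpowers u := by
    intro he
    exact htnc (hu_le_c (by rw [he]; exact ht_mem5))
  have d26 : zpowers u ≠ zpowers t ⊔ zpowers v := by
    intro he
    exact htnc (hu_le_c (by rw [he]; exact ht_mem6))
  have d27 : zpowers u ≠ zpowers (t * u) := by
    intro he
    exact htunc (hu_le_c (by rw [he]; exact mem_zpowers (t*u)))
  have d34 : zpowers v ≠ zpowers t := by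
    intro he
    exact htnc (hv_le_c (by rw [he]; exact mem_zpowers t))
  have d35 : zpowers v ≠ zpowers t ⊔ zpowers u := by
    intro he
    exact htnc (hv_le_c (by rw [he]; exact ht_mem5))
  have d36 : zpowers v ≠ zpowers t ⊔ zpowers v := by
    intro he
    exact htnc (hv_le_c (by rw [he]; exact ht_mem6))
  have d37 : zpowers v ≠ zpowers (t * u) := by
    intro he
    exact htunc (hv_le_c (by rw [he]; exact mem_zpowers (t*u)))
  have d45 : zpowers t ≠ zpowers t ⊔ zpowers u := by
    intro he
    have : u ∈ zpowers t := by rw [he]; exact hu_mem5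
    rcases mem_zpowers_invol ht2 this with h' | h'
    · exact hun h'
    · exact htnc (h' ▸ huc)
  have d46 : zpowers t ≠ zpowers t ⊔ zpowers v := by
    intro he
    have : v ∈ zpowers t := by rw [he]; exact hv_mem6
    rcases mem_zpowers_invol ht2 this with h' | h'
    · exact hvn h'
    · exact htnc (h' ▸ hvc)
  have htnotin7 : t ∉ zpowers (t * u) := by
    intro hmem
    rcases mem_zpowers_invol htu2 hmem with h' | h'
    · exact htn1 h'
    · apply hun
      have : t * 1 = t * u := by rw [mul_one]; exact h'
      exact (mul_left_cancel this).symm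
  have d47 : zpowers t ≠ zpowers (t * u) := by
    intro he
    exact htnotin7 (by rw [← he]; exact mem_zpowers t)
  have d56 : zpowers t ⊔ zpowers u ≠ zpowers t ⊔ zpowers v := by
    intro he
    have hv5 : v ∈ zpowers t ⊔ zpowers u := by rw [he]; exact hv_mem6
    obtain ⟨i, j, hij⟩ := mem_sup_zpowers_central huc hv5
    have hti : t ^ i ∈ Subgroup.center G := by
      have h0 : t ^ i = v * (u ^ j)⁻¹ := by rw [hij]; group
      rw [h0]
      exact mul_mem hvc (inv_mem ((Subgroup.center G).zpow_mem huc j))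
    rcases mem_zpowers_invol ht2 (zpow_mem (mem_zpowers t) i) with h' | h'
    · have hvu : v ∈ zpowers u := by
        have h0 : v = u ^ j := by rw [hij, h', one_mul]
        rw [h0]
        exact zpow_mem (mem_zpowers u) j
      rcases mem_zpowers_invol hu2 hvu with h'' | h''
      · exact hvn h''
      · exact hvnu h''
    · exact htnc (h' ▸ hti)
  have d57 : zpowers t ⊔ zpowers u ≠ zpowers (t * u) := by
    intro he
    exact htnotin7 (by rw [← he]; exact ht_mem5)
  have d67 : zpowers t ⊔ zpowers v ≠ zpowers (t * u) := by
    intro he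
    exact htnotin7 (by rw [← he]; exact ht_mem6)
  -- assemble
  have hmem : ∀ H ∈ ([⊥, zpowers u, zpowers v, zpowers t, zpowers t ⊔ zpowers u,
      zpowers t ⊔ zpowers v, zpowers (t*u)] : List (Subgroup G)), H ∉ CD G := by
    intro H hH
    fin_cases hH
    · exact notin_CD_of_not_center_le m1
    · exact notin_CD_of_not_center_le m2
    · exact notin_CD_of_not_center_le m3
    · exact notin_CD_of_not_center_le m4
    · exact notin_CD_of_not_center_le m5
    · exact notin_CD_of_not_center_le m6
    · exact notin_CD_of_not_center_le m7
  have hndp : ([⊥, zpowers u, zpowers v, zpowers t, zpowers t ⊔ zpowers u,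
      zpowers t ⊔ zpowers v, zpowers (t*u)] : List (Subgroup G)).Nodup := by
    refine List.nodup_cons.mpr ⟨?_, List.nodup_cons.mpr ⟨?_, List.nodup_cons.mpr ⟨?_,
      List.nodup_cons.mpr ⟨?_, List.nodup_cons.mpr ⟨?_, List.nodup_cons.mpr ⟨?_,
      List.nodup_singleton _⟩⟩⟩⟩⟩⟩ <;>
      simp only [List.mem_cons, List.mem_singleton, List.not_mem_nil, or_false] <;>
      push_neg
    · exact ⟨d12, d13, d14, d15, d16, d17⟩
    · exact ⟨d23, d24, d25, d26, d27⟩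
    · exact ⟨d34, d35, d36, d37⟩
    · exact ⟨d45, d46, d47⟩
    · exact ⟨d56, d57⟩
    · exact d67
  have h7 : (7:ℕ) ≤ Nat.card {H : Subgroup G // H ∉ CD G} := by
    have := seven_le_card (S := {H : Subgroup G | H ∉ CD G}) _ hndp hmem
    simpa using this
  unfold deltaCD at h
  omega

end CIx


section CIIx
variable {G : Type*} [Group G]
open Subgroup

lemma zpow_pow_one {c : G} {m : ℕ} (hc : c ^ m = 1) (i : ℤ) : (c ^ i) ^ m = 1 := by
  rw [← zpow_natCast (c ^ i) m, ← zpow_mul,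
    show i * ((m:ℕ):ℤ) = ((m:ℕ):ℤ) * i by ring, zpow_mul, zpow_natCast, hc, one_zpow]

lemma case_cyclic_ii [Finite G] (hG : IsPGroup 2 G) {z0 : G} {n : ℕ}
    (hz0c : z0 ∈ Subgroup.center G) (horder : orderOf z0 = 2 ^ n) (hn : 2 ≤ n)
    (hZeq : Subgroup.center G = zpowers z0)
    (hinv : ∀ t : G, t * t = 1 → t ∈ Subgroup.center G)
    {a b : G} (hab : ¬ a * b = b * a) : False := by
  classical
  haveI : Fact (Nat.Prime 2) := ⟨Nat.prime_two⟩
  have e1 : 2 * 2 ^ (n-1) = 2 ^ n := by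
    rw [← pow_succ']; congr 1; omega
  have hlt1 : 2 ^ (n-1) < 2 ^ n := Nat.pow_lt_pow_right one_lt_two (by omega)
  -- the unique involution u
  set u : G := z0 ^ (2 ^ (n-1)) with hudef
  have hz0pow : z0 ^ (2^n : ℕ) = 1 := by rw [← horder]; exact pow_orderOf_eq_one z0
  have hu2 : u * u = 1 := by
    rw [hudef, ← pow_add, ← two_mul, e1, hz0pow]
  have hun : u ≠ 1 := by
    intro he
    have hd := orderOf_dvd_iff_pow_eq_one.mpr he
    rw [horder] at hd
    have := Nat.le_of_dvd (by positivity) hd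
    omega
  have hu_def : ∀ t : G, t * t = 1 → t = 1 ∨ t = u := by
    intro t ht
    have htc : t ∈ zpowers z0 := by rw [← hZeq]; exact hinv t ht
    obtain ⟨i, hi⟩ := mem_zpowers_iff.mp htc
    have hdvd : ((2:ℤ))^n ∣ 2 * i := by
      have h1 : z0 ^ (2 * i) = 1 := by
        rw [show 2 * i = i + i by ring, zpow_add, hi, ht]
      have := orderOf_dvd_iff_zpow_eq_one.mpr h1
      rw [horder] at this
      exact_mod_cast this
    have hdvd2 : ((2:ℤ))^(n-1) ∣ i := by
      have h2 : (2:ℤ) * 2^(n-1) = 2^n := by exact_mod_cast e1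
      rw [← h2] at hdvd
      exact (mul_dvd_mul_iff_left (two_ne_zero)).mp hdvd
    obtain ⟨k, hk⟩ := hdvd2
    have htu : t ∈ zpowers u := by
      refine ⟨k, ?_⟩
      show u ^ k = t
      rw [hudef, ← hi, hk, ← zpow_natCast z0 (2^(n-1)), ← zpow_mul]
      congr 1
    exact mem_zpowers_invol hu2 htu
  -- order facts
  have hordZ : ∀ w : G, w ∈ Subgroup.center G → orderOf w ∣ 2^n := by
    intro w hw
    rw [hZeq] at hw
    obtain ⟨i, hi⟩ := mem_zpowers_iff.mp hw
    rw [orderOf_dvd_iff_pow_eq_one, ← hi]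
    exact zpow_pow_one hz0pow i
  have hcent_of_dvd : ∀ w : G, orderOf w ∣ 2^n → w ∈ Subgroup.center G := by
    intro w hd
    rw [hZeq]
    exact comparable_of_unique_invol hu_def n n le_rfl w z0
      ((Subgroup.mem_center_iff.mp hz0c w)) hd horder
  have hbig : ∀ w : G, w ∉ Subgroup.center G → ¬ orderOf w ∣ 2^n :=
    fun w hw hd => hw (hcent_of_dvd w hd)
  have hnotc_of_ord : ∀ w : G, orderOf w = 2^(n+1) → w ∉ Subgroup.center G := by
    intro w hw hmem
    have := hordZ w hmem
    rw [hw] at this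
    have := Nat.le_of_dvd (by positivity) this
    have h2 : (2:ℕ)^n < 2^(n+1) := Nat.pow_lt_pow_right one_lt_two (by omega)
    omega
  -- construction of elements of order 2^(n+1)
  have mkx : ∀ g : G, g ∉ Subgroup.center G →
      ∃ x : G, x ∈ zpowers g ∧ orderOf x = 2^(n+1) ∧ Subgroup.center G ≤ zpowers g := by
    intro g hg
    obtain ⟨q, hq⟩ := (IsPGroup.iff_orderOf.mp hG) g
    have hnq : n < q := by
      by_contra hle
      exact hbig g hg (hq ▸ Nat.pow_dvd_pow 2 (by omega))
    refine ⟨g ^ (2 ^ (q - n - 1)), (zpowers g).pow_mem (mem_zpowers g) _, ?_, ?_⟩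
    · rw [orderOf_pow, hq]
      have hgcd : Nat.gcd (2^q) (2^(q-n-1)) = 2^(q-n-1) :=
        Nat.gcd_eq_right (Nat.pow_dvd_pow 2 (by omega))
      rw [hgcd, Nat.pow_div (by omega) (by norm_num)]
      congr 1
      omega
    · intro w hw
      exact comparable_of_unique_invol hu_def n q (by omega) w g
        ((Subgroup.mem_center_iff.mp hw g).symm) (hordZ w hw) hq
  have hsq_ord : ∀ w : G, orderOf w = 2^(n+1) → orderOf (w^(2:ℕ)) ∣ 2^n := by
    intro w hw
    rw [orderOf_dvd_iff_pow_eq_one, ← pow_mul]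
    have h0 : 2 * 2^n = 2^(n+1) := (pow_succ' 2 n).symm
    rw [h0, ← hw]
    exact pow_orderOf_eq_one w
  -- build x and z
  have hanc : a ∉ Subgroup.center G := fun h' => hab ((Subgroup.mem_center_iff.mp h') b).symm
  obtain ⟨x, _, hordx, _⟩ := mkx a hanc
  set z : G := x ^ (2:ℕ) with hzdef
  have hzc : z ∈ Subgroup.center G := hcent_of_dvd _ (hsq_ord x hordx)
  have hxnc : x ∉ Subgroup.center G := hnotc_of_ord x hordx
  have hzpow : z ^ (2^n : ℕ) = 1 := by
    rw [hzdef, ← pow_mul, mul_comm 2 (2^n), ← pow_succ, ← hordx]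
    exact pow_orderOf_eq_one x
  have hordz : orderOf z ∣ 2^n := orderOf_dvd_iff_pow_eq_one.mpr hzpow
  -- center = zpowers z
  have hZz : Subgroup.center G = zpowers z := by
    apply le_antisymm
    · intro w hw
      have hdz : orderOf z = 2^n := by
        obtain ⟨m, hm⟩ := (IsPGroup.iff_orderOf.mp hG) z
        rw [hm]
        congr 1
        by_contra hne
        have hmn : m < n := by
          rw [hm] at hordz
          have := Nat.le_of_dvd (by positivity) hordz
          have := (Nat.pow_le_pow_iff_right (a := 2) (by norm_num)).mp this
          omega
        -- then x^(2^(m+1)) = 1 with m+1 ≤ n, so orderOf x ∣ 2^n, contradiction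
        apply hbig x hxnc
        have hx1 : x ^ (2 ^ (m+1)) = 1 := by
          rw [pow_succ', pow_mul, ← hzdef, ← hm]
          exact pow_orderOf_eq_one z
        calc orderOf x ∣ 2 ^ (m+1) := orderOf_dvd_iff_pow_eq_one.mpr hx1
          _ ∣ 2 ^ n := Nat.pow_dvd_pow 2 (by omega)
      exact comparable_of_unique_invol hu_def n n le_rfl w z
        ((Subgroup.mem_center_iff.mp hzc w)) (hordZ w hw) hdz
    · exact zpowers_le.mpr hzc
  have huz : z ^ (2^(n-1) : ℕ) = u := by
    rcases hu_def (z ^ (2^(n-1) : ℕ)) (by rw [← pow_add, ← two_mul, e1, hzpow]) with h' | h'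
    · exfalso
      apply hbig x hxnc
      have hx1 : x ^ (2^n : ℕ) = 1 := by
        have h9 : (2:ℕ)^n = 2 * 2^(n-1) := e1.symm
        rw [h9, pow_mul, ← hzdef]
        exact h'
      exact orderOf_dvd_iff_pow_eq_one.mpr hx1
    · exact h'
  -- the key computation
  have key : ∀ y : G, y ∉ Subgroup.center G → y^(2:ℕ) ∈ Subgroup.center G →
      (x * y⁻¹ ∉ Subgroup.center G) → (x⁻¹ * y⁻¹ * x * y ∈ Subgroup.center G) → False := by
    intro y hy hy2 hxy hcm
    have hynotpow : y ^ (2^n : ℕ) ≠ 1 :=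
      fun he => hy (hcent_of_dvd y (orderOf_dvd_iff_pow_eq_one.mpr he))
    have hy2z : y^(2:ℕ) ∈ zpowers z := by rw [← hZz]; exact hy2
    obtain ⟨s, hs⟩ := mem_zpowers_iff.mp hy2z
    -- s is odd
    have hsodd : ∃ k : ℤ, s = 2*k + 1 := by
      rcases Int.even_or_odd s with ⟨k, hk⟩ | ⟨k, hk⟩
      · exfalso
        apply hynotpow
        have : y ^ (2^n : ℕ) = (y^(2:ℕ))^(2^(n-1):ℕ) := by
          rw [← pow_mul, ← e1, mul_comm]
        rw [this, ← hs, hk, show k + k = 2*k by ring]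
        have h2 : z ^ (2*k) = (z^k)^(2:ℕ) := by
          rw [← zpow_natCast (z^k) 2, ← zpow_mul]
          congr 1
          push_cast
          ring
        rw [h2, ← pow_mul, e1]
        exact zpow_pow_one hzpow k
      · exact ⟨k, hk⟩
    obtain ⟨k, hk⟩ := hsodd
    by_cases hC : x * y = y * x
    · -- commuting case
      set w' : G := x⁻¹ * y with hw'def
      have hw'nc : w' ∉ Subgroup.center G := by
        intro hmem
        apply hxy
        have hinvmem : y⁻¹ * x ∈ Subgroup.center G := by
          have h9 : y⁻¹ * x = w'⁻¹ := by rw [hw'def]; group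
          rw [h9]
          exact inv_mem hmem
        have h8 : x * y⁻¹ = y * (y⁻¹ * x) * y⁻¹ := by group
        have h0 : y * (y⁻¹ * x) * y⁻¹ = y⁻¹ * x := by
          have hcen := Subgroup.mem_center_iff.mp hinvmem y
          calc y * (y⁻¹ * x) * y⁻¹ = (y * (y⁻¹ * x)) * y⁻¹ := by group
          _ = ((y⁻¹ * x) * y) * y⁻¹ := by rw [hcen]
          _ = y⁻¹ * x := by group
        rw [h8, h0]
        exact hinvmem
      have hyy : y * y = z ^ (s:ℤ) := by
        rw [← pow_two]
        exact hs.symm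
      have hxx : x * x = z := by
        rw [hzdef, pow_two]
      have hw'sq : w' * w' = z ^ ((s:ℤ) - 1) := by
        have hc1 : x⁻¹ * y = y * x⁻¹ := by
          calc x⁻¹ * y = x⁻¹ * (y * x) * x⁻¹ := by group
          _ = x⁻¹ * (x * y) * x⁻¹ := by rw [← hC]
          _ = y * x⁻¹ := by group
        calc w' * w' = x⁻¹ * (y * x⁻¹) * y := by rw [hw'def]; group
        _ = x⁻¹ * (x⁻¹ * y) * y := by rw [← hc1]
        _ = (x*x)⁻¹ * (y*y) := by group
        _ = z⁻¹ * z^(s:ℤ) := by rw [hxx, hyy]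
        _ = z ^ ((s:ℤ) - 1) := by
            rw [← zpow_neg_one, ← zpow_add]
            congr 1
            ring
      apply hw'nc
      apply hcent_of_dvd
      rw [orderOf_dvd_iff_pow_eq_one]
      have h1 : w' ^ (2^n : ℕ) = (w'^(2:ℕ))^(2^(n-1):ℕ) := by
        rw [← pow_mul, ← e1, mul_comm]
      rw [h1, pow_two, hw'sq, hk, show 2*k+1 - 1 = 2*k by ring]
      have h2 : z ^ (2*k) = (z^k)^(2:ℕ) := by
        rw [← zpow_natCast (z^k) 2, ← zpow_mul]
        congr 1
        push_cast
        ring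
      rw [h2, ← pow_mul, e1]
      exact zpow_pow_one hzpow k
    · -- noncommuting case
      set c : G := x⁻¹ * y⁻¹ * x * y with hcdef
      have hcc : c ∈ Subgroup.center G := hcm
      have hcn1 : c ≠ 1 := by
        intro he
        apply hC
        have : x * (x⁻¹ * y⁻¹ * x * y) = x * 1 := by rw [hcdef] at he; rw [he]
        have h2 : y⁻¹ * x * y = x := by
          have h3 := this
          rw [mul_one] at h3
          calc y⁻¹ * x * y = x * (x⁻¹ * y⁻¹ * x * y) := by group
          _ = x := by rw [hcdef] at he; rw [he, mul_one]
        calc x * y = y * (y⁻¹ * x * y) := by group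
        _ = y * x := by rw [h2]
      have hconj : y⁻¹ * x * y = x * c := by rw [hcdef]; group
      have hc2 : c * c = 1 := by
        have hl : y⁻¹ * (x * x) * y = (x*c) * (x*c) := by
          calc y⁻¹ * (x * x) * y = (y⁻¹ * x * y) * (y⁻¹ * x * y) := by group
          _ = (x*c) * (x*c) := by rw [hconj]
        have hr : y⁻¹ * (x * x) * y = x * x := by
          have hzy : (x*x) * y = y * (x*x) := by
            rw [← pow_two, ← hzdef]
            exact ((Subgroup.mem_center_iff.mp hzc y)).symm
          calc y⁻¹ * (x * x) * y = y⁻¹ * ((x*x) * y) := by group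
          _ = y⁻¹ * (y * (x*x)) := by rw [hzy]
          _ = x * x := by group
        have hcx : c * x = x * c := (Subgroup.mem_center_iff.mp hcc x).symm
        have hexp : (x*c) * (x*c) = (x*x) * (c*c) := by
          calc (x*c) * (x*c) = x * (c * x) * c := by group
          _ = x * (x * c) * c := by rw [hcx]
          _ = (x*x) * (c*c) := by group
        have : (x*x) * (c*c) = (x*x) * 1 := by
          rw [mul_one, ← hexp, ← hl, hr]
        exact mul_left_cancel this
      have hcu : c = u := by
        rcases hu_def c hc2 with h' | h'
        · exact absurd h' hcn1
        · exact h'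
      -- (x*y)^2 = z^(1 + s + 2^(n-1))
      have hxysq : (x*y) * (x*y) = z ^ ((1:ℤ) + s + (2^(n-1):ℕ)) := by
        have hyx : x * y = y * x * c := by
          calc x * y = y * (y⁻¹ * x * y) := by group
          _ = y * (x * c) := by rw [hconj]
          _ = y * x * c := by group
        have hzs_cen : ∀ g : G, g * (y*y) = (y*y) * g := by
          intro g
          rw [← pow_two]
          exact (Subgroup.mem_center_iff.mp hy2 g)
        have hc_cen : ∀ g : G, g * c = c * g := fun g => (Subgroup.mem_center_iff.mp hcc g)
        have hyy : y * y = z ^ (s:ℤ) := by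
          rw [← pow_two]
          exact hs.symm
        have hxx : x * x = z := by
          rw [hzdef, pow_two]
        have hcz : c = z ^ ((2^(n-1):ℕ):ℤ) := by
          rw [hcu, zpow_natCast, huz]
        calc (x*y) * (x*y) = (x*y) * (y * x * c) := by rw [← hyx]
        _ = x * (y*y) * x * c := by group
        _ = (y*y) * (x * x) * c := by
            rw [show x * (y*y) * x * c = (x * (y*y)) * (x * c) from by group, hzs_cen x]
            group
        _ = z^(s:ℤ) * z * z^((2^(n-1):ℕ):ℤ) := by rw [hyy, hxx, hcz]
        _ = z ^ ((1:ℤ) + s + (2^(n-1):ℕ)) := by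
            rw [← zpow_add_one, ← zpow_add]
            congr 1
            ring
      have hxync : x * y ∉ Subgroup.center G := by
        intro hmem
        apply hC
        have h0 := (Subgroup.mem_center_iff.mp hmem y)
        -- y * (x*y) = (x*y) * y
        have h1 : (y * x) * y = (x * y) * y := by
          calc (y*x)*y = y*(x*y) := by group
          _ = (x*y)*y := h0
        exact (mul_right_cancel h1).symm
      apply hxync
      apply hcent_of_dvd
      rw [orderOf_dvd_iff_pow_eq_one]
      have h1 : (x*y) ^ (2^n : ℕ) = ((x*y)^(2:ℕ))^(2^(n-1):ℕ) := by
        rw [← pow_mul, ← e1, mul_comm]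
      have e2 : 2 * 2 ^ (n-2) = 2 ^ (n-1) := by
        rw [← pow_succ']; congr 1; omega
      have hM : (1:ℤ) + s + (2^(n-1):ℕ) = 2 * (k + 1 + (2^(n-2):ℕ)) := by
        rw [hk]
        have : ((2^(n-1):ℕ):ℤ) = 2 * ((2^(n-2):ℕ):ℤ) := by exact_mod_cast e2.symm
        rw [this]
        ring
      rw [h1, pow_two, hxysq, hM]
      have h2 : z ^ (2*(k + 1 + ((2:ℕ)^(n-2):ℕ))) = (z^(k + 1 + ((2^(n-2):ℕ):ℤ)))^(2:ℕ) := by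
        rw [← zpow_natCast (z^(k + 1 + ((2^(n-2):ℕ):ℤ))) 2, ← zpow_mul]
        congr 1
        push_cast
        ring
      rw [h2, ← pow_mul, e1]
      exact zpow_pow_one hzpow _
  -- find noncommuting partner for x
  have hg1 : ∃ g1 : G, ¬ x * g1 = g1 * x := by
    by_contra hno
    push_neg at hno
    exact hxnc (Subgroup.mem_center_iff.mpr (fun g => (hno g).symm))
  obtain ⟨g1, hg1⟩ := hg1
  have hg1nc : g1 ∉ Subgroup.center G :=
    fun h' => hg1 ((Subgroup.mem_center_iff.mp h') x)
  obtain ⟨y0, hy0mem, hordy0, hZg1⟩ := mkx g1 hg1nc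
  have hy0nc : y0 ∉ Subgroup.center G := hnotc_of_ord y0 hordy0
  have hy0sq : y0^(2:ℕ) ∈ Subgroup.center G := hcent_of_dvd _ (hsq_ord y0 hordy0)
  have hxg1 : x ∉ zpowers g1 := by
    intro hx
    obtain ⟨i, hi⟩ := mem_zpowers_iff.mp hx
    apply hg1
    rw [← hi]
    exact (Commute.refl g1).zpow_left i
  have hxy0 : x * y0⁻¹ ∉ Subgroup.center G := by
    intro hmem
    apply hxg1
    have : x = (x * y0⁻¹) * y0 := by group
    rw [this]
    exact mul_mem (hZg1 hmem) hy0mem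
  by_cases hB : x⁻¹ * y0⁻¹ * x * y0 ∈ Subgroup.center G
  · exact key y0 hy0nc hy0sq hxy0 hB
  · -- pass to the quotient
    set Q := G ⧸ Subgroup.center G with hQdef
    set π : G →* Q := QuotientGroup.mk' (Subgroup.center G) with hπdef
    have hQ : IsPGroup 2 Q := hG.to_quotient _
    have hπ1 : ∀ g : G, π g = 1 ↔ g ∈ Subgroup.center G := by
      intro g
      exact QuotientGroup.eq_one_iff g
    have hax : (π x) * (π x) = 1 := by
      rw [← map_mul, hπ1, ← pow_two]
      exact hzdef ▸ hzc
    have hay : (π y0) * (π y0) = 1 := by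
      rw [← map_mul, hπ1, ← pow_two]
      exact hy0sq
    have haxinv : (π x)⁻¹ = π x := inv_eq_of_mul_eq_one_right hax
    have hayinv : (π y0)⁻¹ = π y0 := inv_eq_of_mul_eq_one_right hay
    have hnecomm : ¬ (π x) * (π y0) = (π y0) * (π x) := by
      intro he
      apply hB
      rw [← hπ1, map_mul, map_mul, map_mul, map_inv, map_inv, haxinv, hayinv]
      calc π x * π y0 * π x * π y0 = (π x * π y0) * (π x * π y0) := by group
      _ = (π y0 * π x) * (π x * π y0) := by rw [he]
      _ = π y0 * (π x * π x) * π y0 := by group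
      _ = 1 := by rw [hax, mul_one, hay]
    set ρ : Q := π (x * y0) with hρdef
    have hρ : ρ = π x * π y0 := by rw [hρdef, map_mul]
    obtain ⟨kk, hkk⟩ := (IsPGroup.iff_orderOf.mp hQ) ρ
    have hk2 : 2 ≤ kk := by
      by_contra hlt
      apply hnecomm
      have hρ2 : ρ * ρ = 1 := by
        have hd : orderOf ρ ∣ 2 := by
          rw [hkk]
          have h9 : (2:ℕ)^kk ∣ 2^1 := Nat.pow_dvd_pow 2 (by omega)
          simpa using h9
        rw [← pow_two]
        exact orderOf_dvd_iff_pow_eq_one.mp hd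
      have : ρ⁻¹ = ρ := inv_eq_of_mul_eq_one_right hρ2
      calc π x * π y0 = ρ := hρ.symm
      _ = ρ⁻¹ := this.symm
      _ = (π y0)⁻¹ * (π x)⁻¹ := by rw [hρ]; group
      _ = π y0 * π x := by rw [haxinv, hayinv]
    set w : G := (x * y0) ^ (2^(kk-1) : ℕ) with hwdef
    have hπw : π w = ρ ^ (2^(kk-1) : ℕ) := by rw [hwdef, map_pow, hρdef]
    have hπw2 : (π w) * (π w) = 1 := by
      rw [hπw, ← pow_add, ← two_mul, mul_comm 2 (2^(kk-1)), ← pow_succ]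
      have : kk - 1 + 1 = kk := by omega
      rw [this, ← hkk]
      exact pow_orderOf_eq_one ρ
    have hπwinv : (π w)⁻¹ = π w := inv_eq_of_mul_eq_one_right hπw2
    have hwnc : w ∉ Subgroup.center G := by
      intro hmem
      have h0 : π w = 1 := (hπ1 w).mpr hmem
      rw [hπw] at h0
      have hd := orderOf_dvd_iff_pow_eq_one.mpr h0
      rw [hkk] at hd
      have := Nat.le_of_dvd (by positivity) hd
      have h2 : (2:ℕ)^(kk-1) < 2^kk := Nat.pow_lt_pow_right one_lt_two (by omega)
      omega
    have hw2c : w^(2:ℕ) ∈ Subgroup.center G := by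
      rw [← hπ1]
      rw [map_pow, pow_two]
      exact hπw2
    have hρconj : (π x) * ρ * (π x) = ρ⁻¹ := by
      have h1 : (π x) * ρ * (π x) = (π x * π x) * (π y0 * π x) := by
        rw [hρ]; group
      rw [h1, hax, one_mul, hρ, mul_inv_rev, haxinv, hayinv]
    have hconjpow : ∀ m : ℕ, (π x) * ρ^m * (π x) = (ρ⁻¹)^m := by
      intro m
      induction m with
      | zero => simpa using hax
      | succ m ih =>
        have h0 : (π x * ρ^m * π x) * (π x * ρ * π x) = π x * ρ^(m+1) * π x := by
          have h1 : (π x * ρ^m * π x) * (π x * ρ * π x)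
              = π x * ρ^m * (π x * π x) * ρ * π x := by group
          rw [h1, hax, mul_one, pow_succ]
          group
        rw [← h0, ih, hρconj, ← pow_succ]
    have hcommw : π x * π w = π w * π x := by
      have h1 : π x * π w * π x = π w := by
        rw [hπw, hconjpow, inv_pow, ← hπw, hπwinv]
      calc π x * π w = π x * π w * (π x * π x) := by rw [hax, mul_one]
      _ = (π x * π w * π x) * π x := by group
      _ = π w * π x := by rw [h1]
    have hcw : x⁻¹ * w⁻¹ * x * w ∈ Subgroup.center G := by
      rw [← hπ1]
      rw [map_mul, map_mul, map_mul, map_inv, map_inv, haxinv, hπwinv]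
      calc π x * π w * π x * π w = π x * (π w * π x) * π w := by group
      _ = π x * (π x * π w) * π w := by rw [← hcommw]
      _ = (π x * π x) * (π w * π w) := by group
      _ = 1 := by rw [hax, hπw2, one_mul]
    have hxw : x * w⁻¹ ∉ Subgroup.center G := by
      intro hmem
      have h0 : π (x * w⁻¹) = 1 := (hπ1 _).mpr hmem
      rw [map_mul, map_inv] at h0
      have hpxw : π x = π w := by
        have := mul_inv_eq_one.mp h0
        exact this
      apply hnecomm
      have hxρ : Commute (π x) ρ := by
        rw [hpxw, hπw]
        exact ((Commute.refl ρ).pow_left _)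
      have hy0eq : π y0 = π x * ρ := by
        rw [hρ, ← mul_assoc, hax, one_mul]
      rw [hy0eq]
      have h2 : Commute (π x) (π x * ρ) := Commute.mul_right (Commute.refl (π x)) hxρ
      exact h2
    exact key w hwnc hw2c hxw hcw

end CIIx


open Subgroup in
theorem stmt14 {G : Type*} [Group G] [Finite G] (hG : IsPGroup 2 G)
    (hna : ¬ ∀ a b : G, a * b = b * a) (h : deltaCD G ≤ 6) :
    IsCyclic (Subgroup.center G) ∧
      (Nat.card (Subgroup.center G) = 2 ∨ Nat.card (Subgroup.center G) = 4) := by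
  classical
  haveI : Fact (Nat.Prime 2) := ⟨Nat.prime_two⟩
  push_neg at hna
  obtain ⟨a, b, hab⟩ := hna
  haveI : Nontrivial G := by
    refine ⟨⟨a, 1, ?_⟩⟩
    intro he
    rw [he] at hab
    simp at hab
  by_cases hcyc : IsCyclic (Subgroup.center G)
  · haveI := hcyc
    obtain ⟨n, hcard⟩ := IsPGroup.iff_card.mp (hG.to_subgroup (Subgroup.center G))
    haveI hZnt : Nontrivial (Subgroup.center G) := hG.center_nontrivial
    have hn1 : 1 ≤ n := by
      by_contra hlt
      have hn0 : n = 0 := by omega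
      rw [hn0, pow_zero] at hcard
      have := Finite.one_lt_card_iff_nontrivial.mpr hZnt
      omega
    by_cases hn3 : 3 ≤ n
    · exfalso
      obtain ⟨ζ, hζ⟩ := IsCyclic.exists_generator (α := Subgroup.center G)
      set z0 : G := (ζ : G) with hz0def
      have hz0c : z0 ∈ Subgroup.center G := ζ.2
      have hZeq : Subgroup.center G = zpowers z0 := by
        apply le_antisymm
        · intro w hw
          obtain ⟨i, hi⟩ := hζ ⟨w, hw⟩
          refine ⟨i, ?_⟩
          show z0 ^ i = w
          have := congrArg (Subtype.val) hi
          simpa using this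
        · exact zpowers_le.mpr hz0c
      have horder : orderOf z0 = 2 ^ n := by
        rw [hz0def, orderOf_coe, orderOf_eq_card_of_forall_mem_zpowers hζ, hcard]
      by_cases hinv : ∀ t : G, t * t = 1 → t ∈ Subgroup.center G
      · exact case_cyclic_ii hG hz0c horder (by omega) hZeq hinv hab
      · push_neg at hinv
        obtain ⟨t, ht2, htnc⟩ := hinv
        exact case_cyclic_i hz0c horder hn3 ht2 htnc h
    · refine ⟨hcyc, ?_⟩
      rw [hcard]
      have : n = 1 ∨ n = 2 := by omega
      rcases this with h' | h'
      · left; rw [h']; norm_num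
      · right; rw [h']; norm_num
  · exfalso
    exact case_noncyclic hG hab hcyc h
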